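/- For P(t) = t² - 2bt with b ≠ 0, the ring R_2(P) = ℂ[t,t⁻¹,u]/(u² - (t² - 2bt)) is isomorphic as a ℂ-algebra to ℂ[s, s⁻¹, (s+1)⁻¹]. -/

import Mathlib

open Polynomial

noncomputable section Stmt8Aux

namespace Stmt8

instance : IsScalarTower ℂ (Polynomial ℂ) (LaurentPolynomial ℂ) :=
  IsScalarTower.of_algebraMap_eq fun c => by
    rw [LaurentPolynomial.algebraMap_apply, LaurentPolynomial.algebraMap_eq_toLaurent]
    simp

instance : IsLocalization (Submonoid.powers (Polynomial.X : Polynomial ℂ))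
    (LaurentPolynomial ℂ) := LaurentPolynomial.isLocalization

lemma mul_one_uniq {R : Type*} [CommMonoid R] {x y z : R} (h1 : x * y = 1)
    (h2 : x * z = 1) : y = z := by
  rw [← mul_one y, ← h2, ← mul_assoc, mul_comm y x, h1, one_mul]

lemma units_powers {R S : Type*} [CommSemiring R] [CommSemiring S] [Algebra ℂ R]
    [Algebra ℂ S] (φ : R →ₐ[ℂ] S)
    (x : R) (h : IsUnit (φ x)) : ∀ y : Submonoid.powers x, IsUnit (φ y) := by
  rintro ⟨y, n, rfl⟩
  simpa [map_pow] using h.pow n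

/-! ### The target ring `B` -/

abbrev fpoly : Polynomial ℂ := X * (X + 1)

abbrev B : Type := Localization.Away (fpoly)

def sB : B := algebraMap (Polynomial ℂ) B X

def finv : B := IsLocalization.Away.invSelf fpoly

lemma f_mul_finv : sB * (sB + 1) * finv = 1 := by
  have hsf : sB * (sB + 1) = algebraMap (Polynomial ℂ) B fpoly := by
    simp [sB, fpoly, map_mul, map_add, map_one]
  rw [hsf]
  exact IsLocalization.Away.mul_invSelf fpoly

def halfB : B := algebraMap ℂ B 2⁻¹

lemma two_halfB : 2 * halfB = 1 := by
  have h : ((2 : ℂ) * 2⁻¹) = 1 := by norm_num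
  calc 2 * halfB = algebraMap ℂ B 2 * algebraMap ℂ B 2⁻¹ := by
        simp [halfB, map_ofNat]
    _ = 1 := by rw [← map_mul, h, map_one]

def tB (b : ℂ) : B := -(algebraMap ℂ B b * halfB * finv)

def tBinv (b : ℂ) : B := -(algebraMap ℂ B b⁻¹ * 2 * (sB * (sB + 1)))

lemma b_binv (b : ℂ) (hb : b ≠ 0) :
    algebraMap ℂ B b * algebraMap ℂ B b⁻¹ = 1 := by
  rw [← map_mul, mul_inv_cancel₀ hb, map_one]

lemma tB_mul_tBinv (b : ℂ) (hb : b ≠ 0) : tB b * tBinv b = 1 := by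
  rw [tB, tBinv]
  calc -(algebraMap ℂ B b * halfB * finv) * -(algebraMap ℂ B b⁻¹ * 2 * (sB * (sB + 1)))
      = (algebraMap ℂ B b * algebraMap ℂ B b⁻¹) * ((2 * halfB) *
          (sB * (sB + 1) * finv)) := by ring
    _ = 1 := by rw [b_binv b hb, two_halfB, f_mul_finv]; norm_num

lemma tB_isUnit (b : ℂ) (hb : b ≠ 0) : IsUnit (tB b) :=
  IsUnit.of_mul_eq_one _ (tB_mul_tBinv b hb)

def uB (b : ℂ) : B := (2 * sB + 1) * tB b

lemma tB_mul_f (b : ℂ) : tB b * (sB * (sB + 1)) = -(algebraMap ℂ B b * halfB) := by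
  rw [tB]
  linear_combination (-(algebraMap ℂ B b * halfB)) * f_mul_finv

lemma aM_two_mul (b : ℂ) : algebraMap ℂ B (2 * b) = 2 * algebraMap ℂ B b := by
  rw [map_mul, map_ofNat]

lemma uB_sq (b : ℂ) : uB b ^ 2 = tB b ^ 2 - algebraMap ℂ B (2 * b) * tB b := by
  rw [uB, aM_two_mul]
  linear_combination (4 * tB b) * tB_mul_f b +
    (-(2 * algebraMap ℂ B b * tB b)) * two_halfB

/-! ### The source ring `A` -/

def gpoly (b : ℂ) : Polynomial (LaurentPolynomial ℂ) :=
  (X : Polynomial (LaurentPolynomial ℂ)) ^ 2 -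
    C (Polynomial.toLaurent (X ^ 2 - Polynomial.C (2 * b) * X))

abbrev A (b : ℂ) : Type :=
  Polynomial (LaurentPolynomial ℂ) ⧸ Ideal.span {gpoly b}

def π (b : ℂ) : Polynomial (LaurentPolynomial ℂ) →ₐ[ℂ] A b :=
  Ideal.Quotient.mkₐ ℂ (Ideal.span {gpoly b})

def tA (b : ℂ) : A b := π b (C (LaurentPolynomial.T 1))
def tiA (b : ℂ) : A b := π b (C (LaurentPolynomial.T (-1)))
def uA (b : ℂ) : A b := π b X
def halfA (b : ℂ) : A b := (algebraMap ℂ (A b) : ℂ →+* A b) 2⁻¹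

lemma two_halfA (b : ℂ) : 2 * halfA b = 1 := by
  have h : ((2 : ℂ) * 2⁻¹) = 1 := by norm_num
  calc 2 * halfA b = (algebraMap ℂ (A b) : ℂ →+* A b) 2 * (algebraMap ℂ (A b) : ℂ →+* A b) 2⁻¹ := by
        simp [halfA, map_ofNat]
    _ = 1 := by rw [← map_mul, h, map_one]

lemma tA_mul_tiA (b : ℂ) : tA b * tiA b = 1 := by
  rw [tA, tiA, ← map_mul, ← map_mul, ← LaurentPolynomial.T_add]
  norm_num

lemma π_C_const (b : ℂ) (c : ℂ) :
    π b (C (LaurentPolynomial.C c)) = (algebraMap ℂ (A b) : ℂ →+* A b) c := by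
  rw [LaurentPolynomial.C_eq_algebraMap, ← Polynomial.algebraMap_eq,
    ← IsScalarTower.algebraMap_apply]
  exact (π b).commutes c

lemma π_g (b : ℂ) : π b (gpoly b) = 0 := by
  rw [π, Ideal.Quotient.mkₐ_eq_mk, Ideal.Quotient.eq_zero_iff_mem]
  exact Ideal.subset_span rfl

lemma uA_sq (b : ℂ) :
    uA b ^ 2 = tA b ^ 2 - (algebraMap ℂ (A b) : ℂ →+* A b) (2 * b) * tA b := by
  have h0 := π_g b
  simp only [gpoly] at h0
  have hL : Polynomial.toLaurent ((X : Polynomial ℂ) ^ 2 - Polynomial.C (2 * b) * X) =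
      LaurentPolynomial.T 1 ^ 2 - LaurentPolynomial.C (2 * b) * LaurentPolynomial.T 1 := by
    simp [pow_two]
  have h0' : (π b) ((X : Polynomial (LaurentPolynomial ℂ)) ^ 2 -
      C (LaurentPolynomial.T 1 ^ 2 -
        LaurentPolynomial.C (2 * b) * LaurentPolynomial.T 1)) = 0 := by
    rw [← hL]; exact h0
  simp only [map_sub, map_pow, map_mul, π_C_const, map_ofNat] at h0'
  rw [uA, tA, map_mul, map_ofNat]
  linear_combination h0'

/-! ### The map `φ : A → B` -/

def phi0 (b : ℂ) : Polynomial ℂ →ₐ[ℂ] B := aeval (tB b)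

lemma phi0_unit (b : ℂ) (hb : b ≠ 0) :
    ∀ y : Submonoid.powers (X : Polynomial ℂ), IsUnit (phi0 b y) :=
  units_powers (phi0 b) X (by simpa [phi0] using tB_isUnit b hb)

def phi1 (b : ℂ) (hb : b ≠ 0) : LaurentPolynomial ℂ →ₐ[ℂ] B :=
  IsLocalization.liftAlgHom (M := Submonoid.powers (X : Polynomial ℂ))
    (S := LaurentPolynomial ℂ) (phi0_unit b hb)

lemma phi1_toLaurent (b : ℂ) (hb : b ≠ 0) (p : Polynomial ℂ) :
    phi1 b hb (Polynomial.toLaurent p) = aeval (tB b) p := by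
  rw [← LaurentPolynomial.algebraMap_eq_toLaurent, phi1,
    IsLocalization.liftAlgHom_apply, IsLocalization.lift_eq]
  rfl

lemma phi1_T1 (b : ℂ) (hb : b ≠ 0) : phi1 b hb (LaurentPolynomial.T 1) = tB b := by
  rw [← Polynomial.toLaurent_X, phi1_toLaurent]
  simp [phi0]

lemma phi1_Tneg (b : ℂ) (hb : b ≠ 0) : phi1 b hb (LaurentPolynomial.T (-1)) = tBinv b := by
  have h : phi1 b hb (LaurentPolynomial.T 1 * LaurentPolynomial.T (-1)) = 1 := by
    rw [← LaurentPolynomial.T_add]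
    norm_num
  rw [map_mul, phi1_T1] at h
  exact mul_one_uniq h (tB_mul_tBinv b hb)

def phi2 (b : ℂ) (hb : b ≠ 0) : Polynomial (LaurentPolynomial ℂ) →ₐ[ℂ] B :=
  eval₂AlgHom (phi1 b hb) (uB b) (fun a => Commute.all _ _)

lemma phi2_X (b : ℂ) (hb : b ≠ 0) : phi2 b hb X = uB b := by
  simp [phi2]

lemma phi2_C (b : ℂ) (hb : b ≠ 0) (a : LaurentPolynomial ℂ) :
    phi2 b hb (C a) = phi1 b hb a := by
  simp [phi2]

lemma phi2_g (b : ℂ) (hb : b ≠ 0) : phi2 b hb (gpoly b) = 0 := by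
  rw [gpoly, map_sub, map_pow, phi2_X, phi2_C, phi1_toLaurent]
  rw [map_sub, map_pow, map_mul, aeval_X, aeval_C]
  rw [uB_sq]
  ring

def phi (b : ℂ) (hb : b ≠ 0) : A b →ₐ[ℂ] B :=
  Ideal.Quotient.liftₐ _ (phi2 b hb) (by
    intro a ha
    rw [Ideal.mem_span_singleton] at ha
    obtain ⟨c, rfl⟩ := ha
    rw [map_mul, phi2_g, zero_mul])

lemma phi_pi (b : ℂ) (hb : b ≠ 0) (x : Polynomial (LaurentPolynomial ℂ)) :
    phi b hb (π b x) = phi2 b hb x := by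
  rw [phi, π, Ideal.Quotient.mkₐ_eq_mk, Ideal.Quotient.liftₐ_apply]
  rfl

lemma phi_tA (b : ℂ) (hb : b ≠ 0) : phi b hb (tA b) = tB b := by
  rw [tA, phi_pi, phi2_C, phi1_T1]

lemma phi_tiA (b : ℂ) (hb : b ≠ 0) : phi b hb (tiA b) = tBinv b := by
  rw [tiA, phi_pi, phi2_C, phi1_Tneg]

lemma phi_uA (b : ℂ) (hb : b ≠ 0) : phi b hb (uA b) = uB b := by
  rw [uA, phi_pi, phi2_X]

/-! ### The map `ψ : B → A` -/

def sA (b : ℂ) : A b := halfA b * (uA b - tA b) * tiA b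

def psi0 (b : ℂ) : Polynomial ℂ →ₐ[ℂ] A b := aeval (sA b)

lemma sA_mul (b : ℂ) :
    sA b * (sA b + 1) = -((algebraMap ℂ (A b) : ℂ →+* A b) b * halfA b) * tiA b := by
  have hA := uA_sq b
  rw [map_mul, map_ofNat] at hA
  rw [sA]
  linear_combination (halfA b ^ 2 * tiA b ^ 2) * hA +
    (2 * halfA b ^ 2 * tiA b * (tA b - (algebraMap ℂ (A b) : ℂ →+* A b) b - uA b)) * tA_mul_tiA b +
    (halfA b * tiA b * (tA b - (algebraMap ℂ (A b) : ℂ →+* A b) b - uA b)) * two_halfA b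

def sAinv (b : ℂ) : A b := -((algebraMap ℂ (A b) : ℂ →+* A b) b⁻¹ * 2 * tA b)

lemma bA_binv (b : ℂ) (hb : b ≠ 0) :
    (algebraMap ℂ (A b) : ℂ →+* A b) b * (algebraMap ℂ (A b) : ℂ →+* A b) b⁻¹ = 1 := by
  rw [← map_mul, mul_inv_cancel₀ hb, map_one]

lemma sA_mul_sAinv (b : ℂ) (hb : b ≠ 0) :
    sA b * (sA b + 1) * sAinv b = 1 := by
  rw [sAinv]
  linear_combination (-((algebraMap ℂ (A b) : ℂ →+* A b) b⁻¹ * 2 * tA b)) * sA_mul b +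
    (2 * halfA b * (tA b * tiA b)) * bA_binv b hb +
    (2 * halfA b) * tA_mul_tiA b + two_halfA b

lemma psi0_f (b : ℂ) : psi0 b fpoly = sA b * (sA b + 1) := by
  simp [psi0, fpoly]

lemma psi0_unit (b : ℂ) (hb : b ≠ 0) :
    ∀ y : Submonoid.powers (fpoly), IsUnit (psi0 b y) :=
  have hu : IsUnit (sA b * (sA b + 1)) := ⟨⟨_, sAinv b, sA_mul_sAinv b hb,
    (mul_comm (sAinv b) _).trans (sA_mul_sAinv b hb)⟩, rfl⟩
  units_powers (S := A b) (psi0 b) fpoly (by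
    rw [psi0_f]
    exact hu)

def psi (b : ℂ) (hb : b ≠ 0) : B →ₐ[ℂ] A b :=
  IsLocalization.liftAlgHom (M := Submonoid.powers (fpoly)) (S := B) (P := A b) (psi0_unit b hb)

lemma psi_aM (b : ℂ) (hb : b ≠ 0) (p : Polynomial ℂ) :
    psi b hb (algebraMap (Polynomial ℂ) B p) = aeval (sA b) p := by
  rw [psi, IsLocalization.liftAlgHom_apply, IsLocalization.lift_eq]
  rfl

lemma psi_sB (b : ℂ) (hb : b ≠ 0) : psi b hb sB = sA b := by
  rw [sB, psi_aM, aeval_X]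

lemma psi_finv (b : ℂ) (hb : b ≠ 0) : psi b hb finv = sAinv b := by
  have h : psi b hb (sB * (sB + 1) * finv) = 1 := by rw [f_mul_finv]; exact map_one _
  rw [map_mul, map_mul, map_add, map_one, psi_sB] at h
  exact mul_one_uniq h (sA_mul_sAinv b hb)

lemma psi_halfB (b : ℂ) (hb : b ≠ 0) : psi b hb halfB = halfA b := by
  rw [halfB, halfA]; exact (psi b hb).commutes _

lemma psi_tB (b : ℂ) (hb : b ≠ 0) : psi b hb (tB b) = tA b := by
  rw [tB, map_neg, map_mul, map_mul, psi_halfB, psi_finv, sAinv]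
  have hc : psi b hb (algebraMap ℂ B b) = (algebraMap ℂ (A b) : ℂ →+* A b) b := (psi b hb).commutes _
  rw [hc]
  linear_combination (2 * halfA b * tA b) * bA_binv b hb +
    (tA b) * two_halfA b

lemma psi_uB (b : ℂ) (hb : b ≠ 0) : psi b hb (uB b) = uA b := by
  rw [uB, map_mul, map_add, map_mul, map_one, psi_sB, psi_tB]
  have h2 : psi b hb (2 : B) = 2 := map_ofNat (psi b hb) 2
  rw [h2, sA]
  linear_combination (2 * halfA b * (uA b - tA b)) * tA_mul_tiA b +
    (uA b - tA b) * two_halfA b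

/-! ### The two composites -/

lemma comp1 (b : ℂ) (hb : b ≠ 0) : (phi b hb).comp (psi b hb) = AlgHom.id ℂ B := by
  apply AlgHom.coe_ringHom_injective
  apply IsLocalization.ringHom_ext (Submonoid.powers (fpoly))
  apply Polynomial.ringHom_ext
  · intro a
    have h1 : algebraMap (Polynomial ℂ) B (Polynomial.C a) = algebraMap ℂ B a := by
      rw [← Polynomial.algebraMap_eq, ← IsScalarTower.algebraMap_apply]
    simp only [RingHom.comp_apply, RingHom.coe_coe, AlgHom.comp_apply, h1,
      RingHom.id_apply, AlgHom.id_apply]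
    rw [(psi b hb).commutes, (phi b hb).commutes]
  · simp only [RingHom.comp_apply, RingHom.coe_coe, AlgHom.comp_apply,
      RingHom.id_apply, AlgHom.id_apply]
    have hX : algebraMap (Polynomial ℂ) B X = sB := rfl
    rw [hX, psi_sB]
    rw [sA, map_mul, map_mul, map_sub, phi_uA, phi_tA, phi_tiA]
    have hh : phi b hb (halfA b) = halfB := by
      rw [halfA, halfB]; exact (phi b hb).commutes _
    rw [hh, uB]
    linear_combination (2 * halfB * sB) * tB_mul_tBinv b hb + sB * two_halfB

lemma comp2 (b : ℂ) (hb : b ≠ 0) : (psi b hb).comp (phi b hb) = AlgHom.id ℂ (A b) := by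
  apply Ideal.Quotient.algHom_ext
  apply Polynomial.algHom_ext'
  · -- on constants from the Laurent ring
    apply AlgHom.coe_ringHom_injective
    apply IsLocalization.ringHom_ext (Submonoid.powers (X : Polynomial ℂ))
    apply Polynomial.ringHom_ext
    · intro a
      have h1 : algebraMap (Polynomial ℂ) (LaurentPolynomial ℂ) (Polynomial.C a) =
          LaurentPolynomial.C a := by
        rw [LaurentPolynomial.algebraMap_eq_toLaurent, Polynomial.toLaurent_C]
      simp only [RingHom.comp_apply, RingHom.coe_coe, AlgHom.comp_apply, h1]
      show psi b hb (phi b hb ((Ideal.Quotient.mkₐ ℂ _).comp (CAlgHom)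
        (LaurentPolynomial.C a))) = (Ideal.Quotient.mkₐ ℂ _).comp (CAlgHom)
        (LaurentPolynomial.C a)
      have h2 : (Ideal.Quotient.mkₐ ℂ (Ideal.span {gpoly b})).comp (CAlgHom)
          (LaurentPolynomial.C a) = (algebraMap ℂ (A b) : ℂ →+* A b) a := by
        show π b (C (LaurentPolynomial.C a)) = _
        exact π_C_const b a
      rw [h2, (phi b hb).commutes, (psi b hb).commutes]
    · have h1 : algebraMap (Polynomial ℂ) (LaurentPolynomial ℂ) X =
          LaurentPolynomial.T 1 := by
        rw [LaurentPolynomial.algebraMap_eq_toLaurent, Polynomial.toLaurent_X]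
      simp only [RingHom.comp_apply, RingHom.coe_coe, AlgHom.comp_apply, h1]
      show psi b hb (phi b hb ((Ideal.Quotient.mkₐ ℂ _).comp (CAlgHom)
        (LaurentPolynomial.T 1))) = (Ideal.Quotient.mkₐ ℂ _).comp (CAlgHom)
        (LaurentPolynomial.T 1)
      have h2 : (Ideal.Quotient.mkₐ ℂ (Ideal.span {gpoly b})).comp (CAlgHom)
          (LaurentPolynomial.T 1) = tA b := rfl
      rw [h2, phi_tA, psi_tB]
  · show psi b hb (phi b hb (π b X)) = π b X
    rw [← uA, phi_uA, psi_uB]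

end Stmt8

end Stmt8Aux

theorem stmt_8 (b : ℂ) (hb : b ≠ 0) :
    Nonempty
      ((Polynomial (LaurentPolynomial ℂ) ⧸
          Ideal.span {(X : Polynomial (LaurentPolynomial ℂ)) ^ 2 -
            C (Polynomial.toLaurent (X ^ 2 - C (2 * b) * X))}) ≃ₐ[ℂ]
        Localization.Away ((X * (X + 1)) : Polynomial ℂ)) := by
  exact ⟨AlgEquiv.ofAlgHom (Stmt8.phi b hb) (Stmt8.psi b hb)
    (Stmt8.comp1 b hb) (Stmt8.comp2 b hb)⟩
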